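/- Let M_1, …, M_m be a rank-r sequence of matrices in M_d(ℚ) such that im(M_1) ∩ ker(M_m) = {0}. Then the product P = M_1 M_2 ⋯ M_m is stable; that is, im(P) ∩ ker(P) = {0} and rank(P) = rank(P²). -/

import Mathlib

/-- Let `M₁, …, Mₘ` be a rank-`r` sequence of matrices in `M_d(ℚ)` (each matrix has
rank `r` and the product has rank `r`) such that `im(M₁) ∩ ker(Mₘ) = {0}`.  Then the
product `P = M₁ ⋯ Mₘ` is stable: `im(P) ∩ ker(P) = {0}` and `rank P = rank P²`. -/
theorem rank_r_sequence_product_stable (d r : ℕ)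
    (Ms : List (Matrix (Fin d) (Fin d) ℚ)) (hne : Ms ≠ [])
    (hrank : ∀ M ∈ Ms, M.rank = r) (hprod : Ms.prod.rank = r)
    (hik : LinearMap.range (Ms.head hne).mulVecLin ⊓
        LinearMap.ker (Ms.getLast hne).mulVecLin = ⊥) :
    LinearMap.range Ms.prod.mulVecLin ⊓ LinearMap.ker Ms.prod.mulVecLin = ⊥ ∧
    Ms.prod.rank = (Ms.prod * Ms.prod).rank := by
  classical
  set P := Ms.prod with hP
  set f := P.mulVecLin with hf
  have hhead : Ms.head hne :: Ms.tail = Ms := List.cons_head_tail hne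
  have hlast : Ms.dropLast ++ [Ms.getLast hne] = Ms := List.dropLast_append_getLast hne
  -- range f ≤ range head
  have hrange_le : LinearMap.range f ≤ LinearMap.range (Ms.head hne).mulVecLin := by
    have : P = Ms.head hne * Ms.tail.prod := by
      conv_lhs => rw [hP, ← hhead, List.prod_cons]
    rw [hf, this, Matrix.mulVecLin_mul]
    exact LinearMap.range_comp_le_range _ _
  -- ker last ≤ ker f
  have hker_le : LinearMap.ker (Ms.getLast hne).mulVecLin ≤ LinearMap.ker f := by
    have : P = Ms.dropLast.prod * Ms.getLast hne := by
      conv_lhs => rw [hP, ← hlast, List.prod_append, List.prod_singleton]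
    rw [hf, this, Matrix.mulVecLin_mul]
    intro x hx
    simp only [LinearMap.mem_ker] at hx ⊢
    simp [LinearMap.comp_apply, hx]
  -- finranks
  have hd : Module.finrank ℚ (Fin d → ℚ) = d := by simp
  have hrn : ∀ A : Matrix (Fin d) (Fin d) ℚ,
      Module.finrank ℚ (LinearMap.range A.mulVecLin) +
        Module.finrank ℚ (LinearMap.ker A.mulVecLin) = d := by
    intro A
    exact (LinearMap.finrank_range_add_finrank_ker A.mulVecLin).trans hd
  have hhead_rank : (Ms.head hne).rank = r := hrank _ (List.head_mem hne)
  have hlast_rank : (Ms.getLast hne).rank = r := hrank _ (List.getLast_mem hne)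
  have hrange_eq : LinearMap.range f = LinearMap.range (Ms.head hne).mulVecLin := by
    apply Submodule.eq_of_le_of_finrank_le hrange_le
    show ((Ms.head hne).rank : ℕ) ≤ Module.finrank ℚ (LinearMap.range f)
    rw [hhead_rank]
    exact le_of_eq hprod.symm
  have hker_eq : LinearMap.ker (Ms.getLast hne).mulVecLin = LinearMap.ker f := by
    apply Submodule.eq_of_le_of_finrank_le hker_le
    have h1 : Module.finrank ℚ (LinearMap.range f) +
        Module.finrank ℚ (LinearMap.ker f) = d := hrn P
    have h2 := hrn (Ms.getLast hne)
    have hPr : Module.finrank ℚ (LinearMap.range f) = r := hprod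
    have hLr : Module.finrank ℚ (LinearMap.range (Ms.getLast hne).mulVecLin) = r :=
      hlast_rank
    omega
  have hdisj : LinearMap.range f ⊓ LinearMap.ker f = ⊥ := by
    rw [hrange_eq, ← hker_eq]; exact hik
  refine ⟨hdisj, le_antisymm ?_ (Matrix.rank_mul_le_left P P)⟩
  -- rank P ≤ rank (P*P)
  have hcomp : (P * P).mulVecLin = f ∘ₗ f := Matrix.mulVecLin_mul P P
  -- restriction of f to range f is injective
  set g := f.comp (LinearMap.range f).subtype with hg
  have hginj : Function.Injective g := by
    rw [← LinearMap.ker_eq_bot]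
    rw [hg, LinearMap.ker_comp]
    rw [Submodule.eq_bot_iff]
    rintro ⟨x, hx⟩ hmem
    simp only [Submodule.mem_comap, Submodule.coe_subtype] at hmem
    have : x ∈ LinearMap.range f ⊓ LinearMap.ker f := ⟨hx, hmem⟩
    rw [hdisj] at this
    simpa using this
  have hrange_g : LinearMap.range g = LinearMap.range ((P * P).mulVecLin) := by
    rw [hg, hcomp, LinearMap.range_comp, LinearMap.range_comp,
      Submodule.range_subtype]
  have := LinearMap.finrank_range_of_inj hginj
  rw [hrange_g] at this
  show Module.finrank ℚ (LinearMap.range f) ≤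
      Module.finrank ℚ (LinearMap.range (P * P).mulVecLin)
  exact this.ge
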